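/- For every natural number a and every real number θ, the accuracy function of the frequent outcome approach has the condensed polynomial form π_{2a+1}(θ) = 1 − Σ_{i=1}^{a} θ^i·(1−θ)^i·C_{i−1} − 2·(a+1)·C_a·θ^{a+1}·(1−θ)^{a+1}, where C_n denotes the n-th Catalan number. -/

import Mathlib

open Finset

/-- Prediction weight of the frequent outcome approach. -/
noncomputable def w (k n : ℕ) (θ : ℝ) : ℝ :=
  if 2 * n < k then 1 - θ else if 2 * n = k then 1 / 2 else θ

/-- Accuracy function of the frequent outcome approach. -/
noncomputable def acc (k : ℕ) (θ : ℝ) : ℝ :=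
  ∑ n ∈ Finset.range (k + 1), w k n θ * (k.choose n) * θ ^ n * (1 - θ) ^ (k - n)

/-- Lower-tail sum: probability of at most `a` successes among `2a+1` trials. -/
noncomputable def lowA (a : ℕ) (θ : ℝ) : ℝ :=
  ∑ n ∈ Finset.range (a + 1), ((2 * a + 1).choose n : ℝ) * θ ^ n * (1 - θ) ^ (2 * a + 1 - n)

lemma sum_pascal (k m : ℕ) (f : ℕ → ℝ) :
    ∑ n ∈ Finset.range (m + 1), ((k + 1).choose n : ℝ) * f n =
      ∑ n ∈ Finset.range (m + 1), (k.choose n : ℝ) * f n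
        + ∑ n ∈ Finset.range m, (k.choose n : ℝ) * f (n + 1) := by
  rw [Finset.sum_range_succ' (fun n => ((k + 1).choose n : ℝ) * f n) m,
      Finset.sum_range_succ' (fun n => ((k).choose n : ℝ) * f n) m]
  have h : ∀ n, (((k + 1).choose (n + 1) : ℕ) : ℝ)
      = (k.choose n : ℝ) + (k.choose (n + 1) : ℝ) := by
    intro n; rw [Nat.choose_succ_succ]; push_cast; ring
  simp only [h, add_mul, Finset.sum_add_distrib, Nat.choose_zero_right, Nat.cast_one]
  ring

lemma choose_symm_half (a : ℕ) : (2 * a + 1).choose (a + 1) = (2 * a + 1).choose a := by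
  have h := Nat.choose_symm (show a + 1 ≤ 2 * a + 1 by omega)
  rw [show 2 * a + 1 - (a + 1) = a from by omega] at h
  exact h.symm

lemma lowA_succ (a : ℕ) (θ : ℝ) :
    lowA (a + 1) θ = lowA a θ
      + ((2 * a + 1).choose a : ℝ) * θ ^ (a + 1) * (1 - θ) ^ (a + 1) * (1 - 2 * θ) := by
  set q : ℝ := 1 - θ with hq
  set g : ℕ → ℝ := fun n => θ ^ n * q ^ (2 * (a + 1) + 1 - n) with hg
  have step : lowA (a + 1) θ
      = ∑ n ∈ Finset.range (a + 2), ((2 * a + 1).choose n : ℝ) * g n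
        + 2 * ∑ n ∈ Finset.range (a + 1), ((2 * a + 1).choose n : ℝ) * g (n + 1)
        + ∑ n ∈ Finset.range a, ((2 * a + 1).choose n : ℝ) * g (n + 2) := by
    have e1 : lowA (a + 1) θ
        = ∑ n ∈ Finset.range (a + 2), (((2 * a + 1) + 1 + 1).choose n : ℝ) * g n := by
      unfold lowA
      rw [show (2 * a + 1) + 1 + 1 = 2 * (a + 1) + 1 from by ring]
      apply Finset.sum_congr rfl
      intro n _
      ring
    rw [e1, sum_pascal ((2 * a + 1) + 1) (a + 1) g,
        sum_pascal (2 * a + 1) (a + 1) g,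
        sum_pascal (2 * a + 1) a (fun n => g (n + 1))]
    ring
  have hL : lowA a θ = ∑ n ∈ Finset.range (a + 1),
      ((2 * a + 1).choose n : ℝ) * (θ ^ n * q ^ (2 * a + 1 - n)) := by
    unfold lowA
    apply Finset.sum_congr rfl
    intro n _
    ring
  have S2 : ∑ n ∈ Finset.range (a + 2), ((2 * a + 1).choose n : ℝ) * g n
      = q ^ 2 * (lowA a θ + ((2 * a + 1).choose a : ℝ) * (θ ^ (a + 1) * q ^ a)) := by
    calc ∑ n ∈ Finset.range (a + 2), ((2 * a + 1).choose n : ℝ) * g n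
        = ∑ n ∈ Finset.range (a + 2),
            q ^ 2 * (((2 * a + 1).choose n : ℝ) * (θ ^ n * q ^ (2 * a + 1 - n))) := by
          apply Finset.sum_congr rfl
          intro n hn
          simp only [Finset.mem_range] at hn
          have hx : 2 * (a + 1) + 1 - n = (2 * a + 1 - n) + 2 := by omega
          simp only [hg, hx, pow_add]
          ring
      _ = q ^ 2 * ∑ n ∈ Finset.range (a + 2),
            ((2 * a + 1).choose n : ℝ) * (θ ^ n * q ^ (2 * a + 1 - n)) := by
          rw [Finset.mul_sum]
      _ = q ^ 2 * (lowA a θ + ((2 * a + 1).choose a : ℝ) * (θ ^ (a + 1) * q ^ a)) := by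
          rw [Finset.sum_range_succ, ← hL,
              show 2 * a + 1 - (a + 1) = a from by omega, choose_symm_half]
  have S1 : ∑ n ∈ Finset.range (a + 1), ((2 * a + 1).choose n : ℝ) * g (n + 1)
      = θ * q * lowA a θ := by
    calc ∑ n ∈ Finset.range (a + 1), ((2 * a + 1).choose n : ℝ) * g (n + 1)
        = ∑ n ∈ Finset.range (a + 1),
            θ * q * (((2 * a + 1).choose n : ℝ) * (θ ^ n * q ^ (2 * a + 1 - n))) := by
          apply Finset.sum_congr rfl
          intro n hn
          simp only [Finset.mem_range] at hn
          have hx : 2 * (a + 1) + 1 - (n + 1) = (2 * a + 1 - n) + 1 := by omega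
          simp only [hg, hx, pow_add, pow_succ]
          ring
      _ = θ * q * lowA a θ := by rw [hL, Finset.mul_sum]
  have S0 : ∑ n ∈ Finset.range a, ((2 * a + 1).choose n : ℝ) * g (n + 2)
      = θ ^ 2 * (lowA a θ - ((2 * a + 1).choose a : ℝ) * (θ ^ a * q ^ (a + 1))) := by
    have hL' : lowA a θ = (∑ n ∈ Finset.range a,
        ((2 * a + 1).choose n : ℝ) * (θ ^ n * q ^ (2 * a + 1 - n)))
        + ((2 * a + 1).choose a : ℝ) * (θ ^ a * q ^ (a + 1)) := by
      rw [hL, Finset.sum_range_succ, show 2 * a + 1 - a = a + 1 from by omega]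
    calc ∑ n ∈ Finset.range a, ((2 * a + 1).choose n : ℝ) * g (n + 2)
        = ∑ n ∈ Finset.range a,
            θ ^ 2 * (((2 * a + 1).choose n : ℝ) * (θ ^ n * q ^ (2 * a + 1 - n))) := by
          apply Finset.sum_congr rfl
          intro n hn
          simp only [Finset.mem_range] at hn
          have hx : 2 * (a + 1) + 1 - (n + 2) = 2 * a + 1 - n := by omega
          simp only [hg, hx, pow_succ]
          ring
      _ = θ ^ 2 * (lowA a θ - ((2 * a + 1).choose a : ℝ) * (θ ^ a * q ^ (a + 1))) := by
          rw [hL', add_sub_cancel_right, Finset.mul_sum]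
  rw [step, S2, S1, S0]
  simp only [hq, pow_succ]
  ring

lemma choose_eq1 (a : ℕ) : (2 * a + 1).choose a = (2 * a + 1) * catalan a := by
  have h1 : (2 * a + 1) * (2 * a).choose a = (2 * a + 1).choose (a + 1) * (a + 1) :=
    Nat.add_one_mul_choose_eq (2 * a) a
  have hcb : (2 * a).choose a = (a + 1) * catalan a := by
    rw [← Nat.centralBinom, ← succ_mul_catalan_eq_centralBinom]
  have key : (a + 1) * ((2 * a + 1).choose a) = (a + 1) * ((2 * a + 1) * catalan a) := by
    calc (a + 1) * ((2 * a + 1).choose a)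
        = (2 * a + 1).choose (a + 1) * (a + 1) := by rw [choose_symm_half]; ring
      _ = (2 * a + 1) * (2 * a).choose a := h1.symm
      _ = (a + 1) * ((2 * a + 1) * catalan a) := by rw [hcb]; ring
  exact Nat.eq_of_mul_eq_mul_left (by omega) key

lemma choose_eq2 (a : ℕ) : (a + 2) * catalan (a + 1) = 2 * ((2 * a + 1).choose a) := by
  have hcb : (2 * (a + 1)).choose (a + 1) = (a + 2) * catalan (a + 1) := by
    rw [← Nat.centralBinom, ← succ_mul_catalan_eq_centralBinom]
  have hp : (2 * (a + 1)).choose (a + 1)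
      = (2 * a + 1).choose a + (2 * a + 1).choose (a + 1) := by
    rw [show 2 * (a + 1) = (2 * a + 1) + 1 from by ring]
    exact Nat.choose_succ_succ _ _
  rw [← hcb, hp, choose_symm_half]
  ring

lemma key_lemma (a : ℕ) (θ : ℝ) :
    (1 - 2 * θ) * lowA a θ
      = 1 - θ - ∑ i ∈ Finset.Icc 1 a, θ ^ i * (1 - θ) ^ i * (catalan (i - 1) : ℝ)
        - 2 * (a + 1) * (catalan a : ℝ) * θ ^ (a + 1) * (1 - θ) ^ (a + 1) := by
  induction a with
  | zero =>
    simp [lowA]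
    ring
  | succ a ih =>
    rw [lowA_succ, Finset.sum_Icc_succ_top (by omega : 1 ≤ a + 1)]
    have e1 : ((2 * a + 1).choose a : ℝ) = (2 * (a : ℝ) + 1) * (catalan a : ℝ) := by
      exact_mod_cast congrArg (Nat.cast : ℕ → ℝ) (choose_eq1 a)
    have e2 : ((a : ℝ) + 2) * (catalan (a + 1) : ℝ) = 2 * ((2 * a + 1).choose a : ℝ) := by
      exact_mod_cast congrArg (Nat.cast : ℕ → ℝ) (choose_eq2 a)
    have hsub : (a + 1) - 1 = a := by omega
    rw [mul_add, ih, hsub, e1]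
    push_cast
    push_cast at e2
    rw [show ((catalan (a+1) : ℝ)) = 2 * ((2 * (a:ℝ) + 1) * (catalan a : ℝ)) / ((a:ℝ) + 2) from by
      field_simp
      linarith [e2, e1]]
    field_simp
    ring
  

lemma acc_eq (a : ℕ) (θ : ℝ) : acc (2 * a + 1) θ = θ + (1 - 2 * θ) * lowA a θ := by
  have htot : ∑ n ∈ Finset.range (2 * a + 1 + 1),
      ((2 * a + 1).choose n : ℝ) * θ ^ n * (1 - θ) ^ (2 * a + 1 - n) = 1 := by
    have h := add_pow θ (1 - θ) (2 * a + 1)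
    rw [show θ + (1 - θ) = 1 from by ring, one_pow] at h
    have h2 : ∑ n ∈ Finset.range (2 * a + 1 + 1),
        ((2 * a + 1).choose n : ℝ) * θ ^ n * (1 - θ) ^ (2 * a + 1 - n)
        = ∑ n ∈ Finset.range (2 * a + 1 + 1),
          θ ^ n * (1 - θ) ^ (2 * a + 1 - n) * ((2 * a + 1).choose n : ℝ) := by
      apply Finset.sum_congr rfl
      intro n _
      ring
    rw [h2, ← h]
  have hsplit : ∑ n ∈ Finset.range (2 * a + 1 + 1),
        w (2 * a + 1) n θ * ((2 * a + 1).choose n : ℝ) * θ ^ n * (1 - θ) ^ (2 * a + 1 - n)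
      = ∑ n ∈ Finset.range (a + 1),
          w (2 * a + 1) n θ * ((2 * a + 1).choose n : ℝ) * θ ^ n * (1 - θ) ^ (2 * a + 1 - n)
        + ∑ n ∈ Finset.Ico (a + 1) (2 * a + 1 + 1),
          w (2 * a + 1) n θ * ((2 * a + 1).choose n : ℝ) * θ ^ n * (1 - θ) ^ (2 * a + 1 - n) := by
    rw [Finset.range_eq_Ico,
        ← Finset.sum_Ico_consecutive _ (Nat.zero_le (a + 1)) (by omega : a + 1 ≤ 2 * a + 1 + 1),
        ← Finset.range_eq_Ico]
  have hBsplit : ∑ n ∈ Finset.range (2 * a + 1 + 1),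
        ((2 * a + 1).choose n : ℝ) * θ ^ n * (1 - θ) ^ (2 * a + 1 - n)
      = lowA a θ + ∑ n ∈ Finset.Ico (a + 1) (2 * a + 1 + 1),
          ((2 * a + 1).choose n : ℝ) * θ ^ n * (1 - θ) ^ (2 * a + 1 - n) := by
    rw [Finset.range_eq_Ico,
        ← Finset.sum_Ico_consecutive _ (Nat.zero_le (a + 1)) (by omega : a + 1 ≤ 2 * a + 1 + 1),
        ← Finset.range_eq_Ico]
    rfl
  have hlow : ∑ n ∈ Finset.range (a + 1),
        w (2 * a + 1) n θ * ((2 * a + 1).choose n : ℝ) * θ ^ n * (1 - θ) ^ (2 * a + 1 - n)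
      = (1 - θ) * lowA a θ := by
    unfold lowA
    rw [Finset.mul_sum]
    apply Finset.sum_congr rfl
    intro n hn
    simp only [Finset.mem_range] at hn
    unfold w
    rw [if_pos (by omega : 2 * n < 2 * a + 1)]
    ring
  have hhigh : ∑ n ∈ Finset.Ico (a + 1) (2 * a + 1 + 1),
        w (2 * a + 1) n θ * ((2 * a + 1).choose n : ℝ) * θ ^ n * (1 - θ) ^ (2 * a + 1 - n)
      = θ * (1 - lowA a θ) := by
    have hB : ∑ n ∈ Finset.Ico (a + 1) (2 * a + 1 + 1),
        ((2 * a + 1).choose n : ℝ) * θ ^ n * (1 - θ) ^ (2 * a + 1 - n) = 1 - lowA a θ := by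
      have := hBsplit
      rw [htot] at this
      linarith
    rw [← hB, Finset.mul_sum]
    apply Finset.sum_congr rfl
    intro n hn
    simp only [Finset.mem_Ico] at hn
    unfold w
    rw [if_neg (by omega : ¬ 2 * n < 2 * a + 1), if_neg (by omega : ¬ 2 * n = 2 * a + 1)]
    ring
  unfold acc
  rw [hsplit, hlow, hhigh]
  ring

theorem accuracy_condensed_polynomial_form (a : ℕ) (θ : ℝ) :
    acc (2 * a + 1) θ =
      1 - ∑ i ∈ Finset.Icc 1 a, θ ^ i * (1 - θ) ^ i * (catalan (i - 1) : ℝ)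
        - 2 * (a + 1) * (catalan a : ℝ) * θ ^ (a + 1) * (1 - θ) ^ (a + 1) := by
  rw [acc_eq, key_lemma]
  ring
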